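/- arXiv:2202.05671 — 4 statements merged into one kernel-verified Lean document; each statement's English description precedes it below -/
import Mathlib

section
/- Let S > 0, m > 0, and let u, d, r*, C, C^u, C^d, m^u, m^d, β_S, β_C be real numbers with u > r* > d > 0. Suppose the following four equations hold: (uS - S)/S - (r* - 1) = β_S·((m^u - m)/m - (r* - 1)); (dS - S)/S - (r* - 1) = β_S·((m^d - m)/m - (r* - 1)); (C^u - C)/C - (r* - 1) = β_C·((m^u - m)/m - (r* - 1)) (with C ≠ 0); and (C^d - C)/C - (r* - 1) = β_C·((m^d - m)/m - (r* - 1)). Then C = [((r* - d)/(u - d))·C^u + ((u - r*)/(u - d))·C^d] / r*. -/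
theorem stmt_4 (S m u d rS C Cu Cd mu md βS βC : ℝ)
    (hS : 0 < S) (hm : 0 < m) (hC : C ≠ 0)
    (hud : u > rS) (hrd : rS > d) (hd : d > 0)
    (h1 : (u * S - S) / S - (rS - 1) = βS * ((mu - m) / m - (rS - 1)))
    (h2 : (d * S - S) / S - (rS - 1) = βS * ((md - m) / m - (rS - 1)))
    (h3 : (Cu - C) / C - (rS - 1) = βC * ((mu - m) / m - (rS - 1)))
    (h4 : (Cd - C) / C - (rS - 1) = βC * ((md - m) / m - (rS - 1))) :
    C = (((rS - d) / (u - d)) * Cu + ((u - rS) / (u - d)) * Cd) / rS := by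
  have hS0 : S ≠ 0 := ne_of_gt hS
  have hm0 : m ≠ 0 := ne_of_gt hm
  have hrS : (0:ℝ) < rS := hd.trans hrd
  set X := (mu - m) / m - (rS - 1) with hXdef
  set Y := (md - m) / m - (rS - 1) with hYdef
  have e1 : u - rS = βS * X := by
    rw [← h1]; field_simp; ring
  have e2 : d - rS = βS * Y := by
    rw [← h2]; field_simp; ring
  have hβS : βS ≠ 0 := by
    intro h; rw [h, zero_mul] at e1; linarith
  -- key linear combination
  have key : (rS - d) * ((Cu - C) / C - (rS - 1)) + (u - rS) * ((Cd - C) / C - (rS - 1)) = 0 := by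
    have : βS * ((rS - d) * ((Cu - C) / C - (rS - 1)) + (u - rS) * ((Cd - C) / C - (rS - 1))) = 0 := by
      rw [h3, h4]
      linear_combination (-(βC*(rS-d)))*e1 + (-(βC*(u-rS)))*e2
    rcases mul_eq_zero.1 this with h | h
    · exact absurd h hβS
    · exact h
  have key2 : (rS - d) * (Cu - C) + (u - rS) * (Cd - C) = (u - d) * (rS - 1) * C := by
    have := key
    field_simp at this
    linarith
  have hud0 : u - d ≠ 0 := by linarith
  have hrS0 : rS ≠ 0 := ne_of_gt hrS
  field_simp
  ring_nf
  ring_nf at key2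
  linarith
end

section
/- Let k > 0, σ > 0, T > t, and let r be a real number. Define d1(x) = (log(x/k) + (r + σ²/2)·(T - t))/(σ·√(T - t)) and d2(x) = d1(x) - σ·√(T - t), and let Φ be the standard normal cumulative distribution function. Then the Black–Scholes call price function x ↦ w(x) = x·Φ(d1(x)) - k·exp(-r·(T - t))·Φ(d2(x)) is differentiable at every x > 0 with derivative ∂w/∂x = Φ(d1(x)). -/
open Real MeasureTheory

/-- Standard normal cumulative distribution function. -/
noncomputable def stdNormalCDF (y : ℝ) : ℝ :=
  ∫ u in Set.Iic y, (1 / Real.sqrt (2 * π)) * Real.exp (-u ^ 2 / 2)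

noncomputable def stdNormalPDF (u : ℝ) : ℝ :=
  (1 / Real.sqrt (2 * π)) * Real.exp (-u ^ 2 / 2)

lemma stdNormalPDF_integrable : Integrable stdNormalPDF := by
  have h : stdNormalPDF = fun u => (1 / Real.sqrt (2 * π)) * Real.exp (-(1/2) * u ^ 2) := by
    funext u; unfold stdNormalPDF; ring_nf
  rw [h]
  exact (integrable_exp_neg_mul_sq (by norm_num : (0:ℝ) < 1/2)).const_mul _

lemma stdNormalPDF_continuous : Continuous stdNormalPDF := by
  unfold stdNormalPDF
  fun_prop

lemma hasDerivAt_stdNormalCDF (y : ℝ) : HasDerivAt stdNormalCDF (stdNormalPDF y) y := by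
  have hint := stdNormalPDF_integrable
  have heq : stdNormalCDF = fun z =>
      (∫ u in Set.Iic (0:ℝ), stdNormalPDF u) + ∫ u in (0:ℝ)..z, stdNormalPDF u := by
    funext z
    rw [← intervalIntegral.integral_Iic_sub_Iic hint.integrableOn hint.integrableOn]
    unfold stdNormalCDF stdNormalPDF
    ring
  rw [heq]
  have hd : HasDerivAt (fun z => ∫ u in (0:ℝ)..z, stdNormalPDF u) (stdNormalPDF y) y :=
    intervalIntegral.integral_hasDerivAt_right hint.intervalIntegrable
      (stdNormalPDF_continuous.stronglyMeasurableAtFilter _ _)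
      stdNormalPDF_continuous.continuousAt
  exact hd.const_add _

theorem stmt_6 (k σ t T r : ℝ) (hk : 0 < k) (hσ : 0 < σ) (hT : t < T)
    (d1 : ℝ → ℝ)
    (hd1 : ∀ x, d1 x = (Real.log (x / k) + (r + σ ^ 2 / 2) * (T - t)) / (σ * Real.sqrt (T - t)))
    (d2 : ℝ → ℝ) (hd2 : ∀ x, d2 x = d1 x - σ * Real.sqrt (T - t)) :
    ∀ x : ℝ, 0 < x →
      HasDerivAt (fun y : ℝ => y * stdNormalCDF (d1 y) - k * Real.exp (-r * (T - t)) * stdNormalCDF (d2 y))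
        (stdNormalCDF (d1 x)) x := by
  intro x hx
  have hτ : 0 < T - t := by linarith
  have hs : 0 < Real.sqrt (T - t) := Real.sqrt_pos.mpr hτ
  set m : ℝ := σ * Real.sqrt (T - t) with hm_def
  have hm : 0 < m := mul_pos hσ hs
  set c : ℝ := (r + σ ^ 2 / 2) * (T - t) with hc_def
  -- derivative of log(y/k) at x
  have hlog : HasDerivAt (fun y : ℝ => Real.log (y / k)) (1 / x) x := by
    have h1 : HasDerivAt (fun y : ℝ => y / k) (1 / k) x := by
      simpa using (hasDerivAt_id x).div_const k
    have h2 := (Real.hasDerivAt_log (div_ne_zero hx.ne' hk.ne')).comp x h1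
    rw [show (1:ℝ) / x = (x / k)⁻¹ * (1 / k) by field_simp]
    exact h2
  -- derivative of d1
  have hD1 : HasDerivAt d1 (1 / (x * m)) x := by
    have : HasDerivAt (fun y : ℝ => (Real.log (y / k) + c) / m) ((1 / x) / m) x :=
      ((hlog.add_const c).div_const m)
    have heq : d1 = fun y : ℝ => (Real.log (y / k) + c) / m := by
      funext y; rw [hd1 y]
    rw [heq]
    convert this using 1
    field_simp
  have hD2 : HasDerivAt d2 (1 / (x * m)) x := by
    have heq : d2 = fun y : ℝ => d1 y - m := by funext y; rw [hd2 y]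
    rw [heq]
    simpa using hD1.sub_const m
  -- chain rules
  have hΦ1 : HasDerivAt (fun y => stdNormalCDF (d1 y)) (stdNormalPDF (d1 x) * (1 / (x * m))) x :=
    (hasDerivAt_stdNormalCDF (d1 x)).comp x hD1
  have hΦ2 : HasDerivAt (fun y => stdNormalCDF (d2 y)) (stdNormalPDF (d2 x) * (1 / (x * m))) x :=
    (hasDerivAt_stdNormalCDF (d2 x)).comp x hD2
  have hprod : HasDerivAt (fun y : ℝ => y * stdNormalCDF (d1 y))
      (1 * stdNormalCDF (d1 x) + x * (stdNormalPDF (d1 x) * (1 / (x * m)))) x :=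
    (hasDerivAt_id x).mul hΦ1
  have hw : HasDerivAt
      (fun y : ℝ => y * stdNormalCDF (d1 y) - k * Real.exp (-r * (T - t)) * stdNormalCDF (d2 y))
      (1 * stdNormalCDF (d1 x) + x * (stdNormalPDF (d1 x) * (1 / (x * m)))
        - k * Real.exp (-r * (T - t)) * (stdNormalPDF (d2 x) * (1 / (x * m)))) x :=
    hprod.sub (hΦ2.const_mul _)
  -- key identity: x * pdf(d1 x) = k * exp(-r(T-t)) * pdf(d2 x)
  have hkey : x * stdNormalPDF (d1 x) = k * Real.exp (-r * (T - t)) * stdNormalPDF (d2 x) := by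
    have hd1m : d1 x * m = Real.log x - Real.log k + c := by
      rw [hd1 x, Real.log_div hx.ne' hk.ne']
      field_simp
    have hm2 : m ^ 2 = σ ^ 2 * (T - t) := by
      rw [hm_def, mul_pow, Real.sq_sqrt hτ.le]
    have hd2x : d2 x = d1 x - m := hd2 x
    set a := d1 x with ha
    unfold stdNormalPDF
    rw [hd2x]
    have e1 : x * (1 / Real.sqrt (2 * π) * Real.exp (-a ^ 2 / 2))
        = 1 / Real.sqrt (2 * π) * Real.exp (Real.log x + -a ^ 2 / 2) := by
      rw [Real.exp_add, Real.exp_log hx]; ring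
    have e2 : k * Real.exp (-r * (T - t)) * (1 / Real.sqrt (2 * π) * Real.exp (-(a - m) ^ 2 / 2))
        = 1 / Real.sqrt (2 * π) * Real.exp (Real.log k + -r * (T - t) + -(a - m) ^ 2 / 2) := by
      rw [Real.exp_add, Real.exp_add, Real.exp_log hk]; ring
    rw [e1, e2]
    congr 1
    rw [Real.exp_eq_exp]
    have hc : c = r * (T - t) + σ ^ 2 / 2 * (T - t) := by rw [hc_def]; ring
    nlinarith [hd1m, hm2, hc]
  convert hw using 1
  have hxm : x * m ≠ 0 := (mul_pos hx hm).ne'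
  field_simp
  rw [show -(r * (T - t)) = -r * (T - t) by ring]
  linarith [hkey]
end

section
/- Let x > 0, k > 0, σ > 0, τ > 0, and let μ be a real number. Let γ denote the standard Gaussian measure on ℝ (mean 0, variance 1). Then ∫_ℝ max(x·exp((μ - σ²/2)·τ + σ·√τ·z) - k, 0) dγ(z) = exp(μ·τ)·Φ(d1*)·x - Φ(d2*)·k, where d1* = (log(x/k) + (μ + σ²/2)·τ)/(σ·√τ), d2* = d1* - σ·√τ, and Φ is the standard normal cumulative distribution function. -/
open Real MeasureTheory ProbabilityTheory
open scoped ENNReal NNReal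

lemma stdNormalCDF_eq (y : ℝ) :
    stdNormalCDF y = (1 / Real.sqrt (2 * π)) * ∫ u in Set.Iic y, Real.exp (-u ^ 2 / 2) := by
  rw [stdNormalCDF, integral_const_mul]

lemma integrable_exp_bz_sub_sq (b : ℝ) :
    Integrable (fun z : ℝ => Real.exp (b * z - z ^ 2 / 2)) := by
  have h1 : Integrable (fun z : ℝ => Real.exp (-(1/2 : ℝ) * z ^ 2)) :=
    integrable_exp_neg_mul_sq (by norm_num)
  have h2 : Integrable (fun z : ℝ => Real.exp (-(1/2 : ℝ) * (z - b) ^ 2)) :=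
    ((measurePreserving_sub_right (volume : Measure ℝ) b).integrable_comp
      h1.aestronglyMeasurable).mpr h1
  have h3 := h2.const_mul (Real.exp (b ^ 2 / 2))
  refine h3.congr (Filter.Eventually.of_forall fun z => ?_)
  simp only
  rw [show b * z - z ^ 2 / 2 = b ^ 2 / 2 + -(1/2 : ℝ) * (z - b) ^ 2 by ring, Real.exp_add]

lemma setIntegral_Ici_shift (f : ℝ → ℝ) (b c : ℝ) :
    ∫ z in Set.Ici c, f (z - b) = ∫ u in Set.Ici (c - b), f u := by
  have h := (measurePreserving_add_right (volume : Measure ℝ) (-b)).setIntegral_preimage_emb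
    (measurableEmbedding_addRight (-b)) f (Set.Ici (c - b))
  have hpre : (fun z : ℝ => z + -b) ⁻¹' Set.Ici (c - b) = Set.Ici c := by
    ext z
    simp only [Set.mem_preimage, Set.mem_Ici, ← sub_eq_add_neg, sub_le_sub_iff_right]
  rw [← h, hpre]
  simp_rw [← sub_eq_add_neg]

lemma gaussian_key (b c : ℝ) :
    ∫ z in Set.Ici c, Real.exp (b * z - z ^ 2 / 2) =
      Real.exp (b ^ 2 / 2) * Real.sqrt (2 * π) * stdNormalCDF (b - c) := by
  have h1 : ∀ z : ℝ, Real.exp (b * z - z ^ 2 / 2)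
      = Real.exp (b ^ 2 / 2) * Real.exp (-(z - b) ^ 2 / 2) := by
    intro z; rw [← Real.exp_add]; congr 1; ring
  calc ∫ z in Set.Ici c, Real.exp (b * z - z ^ 2 / 2)
      = ∫ z in Set.Ici c, Real.exp (b ^ 2 / 2) * Real.exp (-(z - b) ^ 2 / 2) := by
        exact setIntegral_congr_fun measurableSet_Ici fun z _ => h1 z
    _ = Real.exp (b ^ 2 / 2) * ∫ z in Set.Ici c, Real.exp (-(z - b) ^ 2 / 2) := by
        rw [integral_const_mul]
    _ = Real.exp (b ^ 2 / 2) * ∫ u in Set.Ici (c - b), Real.exp (-u ^ 2 / 2) := by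
        rw [setIntegral_Ici_shift (fun u => Real.exp (-u ^ 2 / 2)) b c]
    _ = Real.exp (b ^ 2 / 2) * ∫ u in Set.Iic (b - c), Real.exp (-u ^ 2 / 2) := by
        congr 1
        rw [MeasureTheory.integral_Ici_eq_integral_Ioi, show b - c = -(c - b) by ring,
          ← integral_comp_neg_Ioi (c - b) (fun u => Real.exp (-u ^ 2 / 2))]
        refine setIntegral_congr_fun measurableSet_Ioi fun u _ => ?_
        simp [neg_sq]
    _ = Real.exp (b ^ 2 / 2) * Real.sqrt (2 * π) * stdNormalCDF (b - c) := by
        rw [stdNormalCDF_eq]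
        have h2π : (0:ℝ) < Real.sqrt (2 * π) :=
          Real.sqrt_pos.mpr (by positivity)
        field_simp

theorem stmt_11 (x k σ τ μ : ℝ) (hx : 0 < x) (hk : 0 < k) (hσ : 0 < σ) (hτ : 0 < τ)
    (d1 d2 : ℝ)
    (hd1 : d1 = (Real.log (x / k) + (μ + σ ^ 2 / 2) * τ) / (σ * Real.sqrt τ))
    (hd2 : d2 = d1 - σ * Real.sqrt τ) :
    ∫ z, max (x * Real.exp ((μ - σ ^ 2 / 2) * τ + σ * Real.sqrt τ * z) - k) 0
        ∂(gaussianReal 0 1) =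
      Real.exp (μ * τ) * stdNormalCDF d1 * x - stdNormalCDF d2 * k := by
  have hsτ : 0 < Real.sqrt τ := Real.sqrt_pos.mpr hτ
  set b : ℝ := σ * Real.sqrt τ with hbdef
  have hb : 0 < b := mul_pos hσ hsτ
  set a : ℝ := (μ - σ ^ 2 / 2) * τ with hadef
  set c : ℝ := (Real.log (k / x) - a) / b with hcdef
  -- rewrite the gaussian integral as a Lebesgue integral with density
  have hmeas : Measurable fun z : ℝ => (gaussianPDFReal 0 1 z).toNNReal :=
    (measurable_gaussianPDFReal 0 1).real_toNNReal
  have hrw : (gaussianReal 0 1 : Measure ℝ)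
      = volume.withDensity (fun z => ((gaussianPDFReal 0 1 z).toNNReal : ℝ≥0∞)) := by
    rw [gaussianReal_of_var_ne_zero 0 one_ne_zero]; rfl
  rw [hrw, integral_withDensity_eq_integral_smul hmeas]
  have hpdf : ∀ z : ℝ, ((gaussianPDFReal 0 1 z).toNNReal : ℝ) = gaussianPDFReal 0 1 z :=
    fun z => Real.coe_toNNReal _ (gaussianPDFReal_nonneg 0 1 z)
  have hpdf2 : ∀ z : ℝ, gaussianPDFReal 0 1 z
      = (Real.sqrt (2 * π))⁻¹ * Real.exp (-z ^ 2 / 2) := by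
    intro z
    simp [gaussianPDFReal]
  -- the integrand as an indicator function
  have hind : (fun z : ℝ =>
      ((gaussianPDFReal 0 1 z).toNNReal : ℝ≥0)
        • max (x * Real.exp ((μ - σ ^ 2 / 2) * τ + σ * Real.sqrt τ * z) - k) 0)
      = Set.indicator (Set.Ici c)
        (fun z => (Real.sqrt (2 * π))⁻¹ * Real.exp (-z ^ 2 / 2)
          * (x * Real.exp (a + b * z) - k)) := by
    funext z
    rw [NNReal.smul_def, smul_eq_mul, hpdf, hpdf2]
    have hab : (μ - σ ^ 2 / 2) * τ + σ * Real.sqrt τ * z = a + b * z := by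
      rw [hadef, hbdef]
    rw [hab]
    by_cases hz : c ≤ z
    · have hge : k ≤ x * Real.exp (a + b * z) := by
        have hlog : Real.log (k / x) ≤ a + b * z := by
          rw [hcdef, div_le_iff₀ hb] at hz
          linarith
        have := Real.exp_le_exp.mpr hlog
        rw [Real.exp_log (div_pos hk hx)] at this
        rw [div_le_iff₀ hx] at this
        linarith [this]
      rw [Set.indicator_of_mem (Set.mem_Ici.mpr hz), max_eq_left (by linarith)]
    · have hlt : x * Real.exp (a + b * z) < k := by
        have hlog : a + b * z < Real.log (k / x) := by
          rw [hcdef, div_le_iff₀ hb, not_le] at hz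
          linarith
        have := Real.exp_lt_exp.mpr hlog
        rw [Real.exp_log (div_pos hk hx)] at this
        rw [lt_div_iff₀ hx] at this
        linarith [this]
      rw [Set.indicator_of_notMem (by simpa using hz), max_eq_right (by linarith), mul_zero]
  rw [hind, MeasureTheory.integral_indicator measurableSet_Ici]
  -- split the integral
  have hint1 : IntegrableOn
      (fun z : ℝ => (Real.sqrt (2 * π))⁻¹ * Real.exp (-z ^ 2 / 2)
        * (x * Real.exp (a + b * z))) (Set.Ici c) := by
    have h := ((integrable_exp_bz_sub_sq b).const_mul
      ((Real.sqrt (2 * π))⁻¹ * x * Real.exp a)).integrableOn (s := Set.Ici c)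
    refine h.congr_fun (fun z _ => ?_) measurableSet_Ici
    have h3 : Real.exp (-z ^ 2 / 2) * Real.exp (a + b * z)
        = Real.exp a * Real.exp (b * z - z ^ 2 / 2) := by
      rw [← Real.exp_add, ← Real.exp_add]; ring_nf
    linear_combination ((Real.sqrt (2 * π))⁻¹ * x) * h3.symm
  have hint2 : IntegrableOn
      (fun z : ℝ => (Real.sqrt (2 * π))⁻¹ * Real.exp (-z ^ 2 / 2) * k) (Set.Ici c) := by
    have h := ((integrable_exp_bz_sub_sq 0).const_mul
      ((Real.sqrt (2 * π))⁻¹ * k)).integrableOn (s := Set.Ici c)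
    refine h.congr_fun (fun z _ => ?_) measurableSet_Ici
    ring_nf
  have hsplit : ∀ z : ℝ, (Real.sqrt (2 * π))⁻¹ * Real.exp (-z ^ 2 / 2)
      * (x * Real.exp (a + b * z) - k)
      = (Real.sqrt (2 * π))⁻¹ * Real.exp (-z ^ 2 / 2) * (x * Real.exp (a + b * z))
        - (Real.sqrt (2 * π))⁻¹ * Real.exp (-z ^ 2 / 2) * k := fun z => by ring
  rw [setIntegral_congr_fun measurableSet_Ici fun z _ => hsplit z,
    MeasureTheory.integral_sub hint1 hint2]
  -- compute the two pieces
  have hsq : Real.sqrt (2 * π) ≠ 0 := ne_of_gt (Real.sqrt_pos.mpr (by positivity))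
  have hI1 : ∫ z in Set.Ici c, (Real.sqrt (2 * π))⁻¹ * Real.exp (-z ^ 2 / 2)
      * (x * Real.exp (a + b * z))
      = Real.exp (a + b ^ 2 / 2) * x * stdNormalCDF (b - c) := by
    have heq : ∀ z : ℝ, (Real.sqrt (2 * π))⁻¹ * Real.exp (-z ^ 2 / 2)
        * (x * Real.exp (a + b * z))
        = ((Real.sqrt (2 * π))⁻¹ * x * Real.exp a) * Real.exp (b * z - z ^ 2 / 2) := by
      intro z
      have h3 : Real.exp (-z ^ 2 / 2) * Real.exp (a + b * z)
          = Real.exp a * Real.exp (b * z - z ^ 2 / 2) := by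
        rw [← Real.exp_add, ← Real.exp_add]; ring_nf
      linear_combination ((Real.sqrt (2 * π))⁻¹ * x) * h3
    rw [setIntegral_congr_fun measurableSet_Ici fun z _ => heq z, integral_const_mul,
      gaussian_key b c, Real.exp_add]
    field_simp
  have hI2 : ∫ z in Set.Ici c, (Real.sqrt (2 * π))⁻¹ * Real.exp (-z ^ 2 / 2) * k
      = k * stdNormalCDF (-c) := by
    have heq : ∀ z : ℝ, (Real.sqrt (2 * π))⁻¹ * Real.exp (-z ^ 2 / 2) * k
        = ((Real.sqrt (2 * π))⁻¹ * k) * Real.exp (0 * z - z ^ 2 / 2) := by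
      intro z; ring_nf
    rw [setIntegral_congr_fun measurableSet_Ici fun z _ => heq z, integral_const_mul,
      gaussian_key 0 c]
    simp only [ne_eq, OfNat.ofNat_ne_zero, not_false_eq_true, zero_pow, zero_div, Real.exp_zero,
      one_mul, zero_sub]
    field_simp
  rw [hI1, hI2]
  -- identify the constants
  have hb2 : b ^ 2 = σ ^ 2 * τ := by
    rw [hbdef, mul_pow, Real.sq_sqrt hτ.le]
  have hab2 : a + b ^ 2 / 2 = μ * τ := by rw [hadef, hb2]; ring
  have hlogkx : Real.log (k / x) = -Real.log (x / k) := by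
    rw [← Real.log_inv, inv_div]
  have hbne : b ≠ 0 := ne_of_gt hb
  clear_value b a c
  have hd1' : b - c = d1 := by
    rw [hd1, hcdef, hlogkx, hadef]
    rw [eq_div_iff hbne, sub_mul, div_mul_cancel₀ _ hbne]
    linear_combination hb2
  have hd2' : -c = d2 := by
    rw [hd2, ← hd1']; ring
  rw [hab2, hd1', hd2']
  ring
end

section
/- Let x > 0, k > 0, σ > 0, τ > 0, and let r be a real number. Let γ denote the standard Gaussian measure on ℝ. Then exp(-r·τ)·∫_ℝ max(x·exp((r - σ²/2)·τ + σ·√τ·z) - k, 0) dγ(z) = x·Φ(d1) - k·exp(-r·τ)·Φ(d2), where d1 = (log(x/k) + (r + σ²/2)·τ)/(σ·√τ), d2 = d1 - σ·√τ, and Φ is the standard normal cumulative distribution function. -/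
open Real MeasureTheory ProbabilityTheory

namespace BSaux

open scoped NNReal ENNReal

noncomputable def φ (u : ℝ) : ℝ := (1 / Real.sqrt (2 * π)) * Real.exp (-u ^ 2 / 2)

lemma pdf_eq (u : ℝ) : gaussianPDFReal 0 1 u = φ u := by
  simp [gaussianPDFReal, φ, one_div]

lemma pdf_shift (b u : ℝ) : gaussianPDFReal b 1 u = φ (u - b) := by
  simp [gaussianPDFReal, φ, one_div]

lemma integrable_pdf : Integrable φ :=
  (integrable_gaussianPDFReal 0 1).congr (Filter.Eventually.of_forall pdf_eq)

lemma integral_gauss01 (f : ℝ → ℝ) :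
    ∫ z, f z ∂(gaussianReal 0 1) = ∫ z, f z * φ z := by
  rw [gaussianReal_of_var_ne_zero 0 one_ne_zero]
  have hd : gaussianPDF 0 1 = fun x => ((Real.toNNReal (gaussianPDFReal 0 1 x) : ℝ≥0) : ℝ≥0∞) :=
    rfl
  rw [hd, integral_withDensity_eq_integral_smul
    ((measurable_gaussianPDFReal 0 1).real_toNNReal) f]
  congr 1
  ext z
  rw [NNReal.smul_def, smul_eq_mul, Real.coe_toNNReal _ (gaussianPDFReal_nonneg 0 1 z),
    pdf_eq, mul_comm]

lemma shift_Ici (f : ℝ → ℝ) (c b : ℝ) :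
    ∫ z in Set.Ici c, f (z - b) = ∫ u in Set.Ici (c - b), f u := by
  rw [← integral_indicator measurableSet_Ici, ← integral_indicator measurableSet_Ici]
  have h : ∀ z : ℝ, (Set.Ici c).indicator (fun z => f (z - b)) z
      = (Set.Ici (c - b)).indicator f (z - b) := by
    intro z
    by_cases hz : c ≤ z
    · simp only [Set.indicator_apply, Set.mem_Ici, hz, if_true,
        (by linarith : c - b ≤ z - b), if_true]
    · simp only [Set.indicator_apply, Set.mem_Ici, hz, if_false]
      rw [if_neg (fun h : c - b ≤ z - b => hz (by linarith))]
  simp_rw [h]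
  exact integral_sub_right_eq_self _ b

lemma neg_Ici (f : ℝ → ℝ) (hf : ∀ u, f (-u) = f u) (c : ℝ) :
    ∫ z in Set.Ici c, f z = ∫ u in Set.Iic (-c), f u := by
  have h := integral_comp_neg_Iic (-c) f
  rw [neg_neg, ← integral_Ici_eq_integral_Ioi] at h
  rw [← h]
  exact setIntegral_congr_fun measurableSet_Iic fun u _ => hf u

lemma exp_mul_pdf (b z : ℝ) :
    Real.exp (b * z) * φ z = Real.exp (b ^ 2 / 2) * φ (z - b) := by
  have h2 : Real.exp (b * z) * Real.exp (-z ^ 2 / 2)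
      = Real.exp (b ^ 2 / 2) * Real.exp (-(z - b) ^ 2 / 2) := by
    rw [← Real.exp_add, ← Real.exp_add]; congr 1; ring
  simp only [φ]
  linear_combination (1 / Real.sqrt (2 * π)) * h2

lemma integrable_exp_mul_pdf (b : ℝ) :
    Integrable (fun z => Real.exp (b * z) * φ z) := by
  have h : (fun z => Real.exp (b * z) * φ z)
      = fun z => Real.exp (b ^ 2 / 2) * gaussianPDFReal b 1 z := by
    ext z
    rw [exp_mul_pdf, pdf_shift]
  rw [h]
  exact (integrable_gaussianPDFReal b 1).const_mul _

lemma integral_exp_mul_pdf_Ici (b c : ℝ) :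
    ∫ z in Set.Ici c, Real.exp (b * z) * φ z
      = Real.exp (b ^ 2 / 2) * stdNormalCDF (b - c) := by
  calc ∫ z in Set.Ici c, Real.exp (b * z) * φ z
      = ∫ z in Set.Ici c, Real.exp (b ^ 2 / 2) * φ (z - b) :=
        setIntegral_congr_fun measurableSet_Ici fun z _ => exp_mul_pdf b z
    _ = Real.exp (b ^ 2 / 2) * ∫ z in Set.Ici c, φ (z - b) := by rw [integral_const_mul]
    _ = Real.exp (b ^ 2 / 2) * ∫ u in Set.Ici (c - b), φ u := by rw [shift_Ici]
    _ = Real.exp (b ^ 2 / 2) * ∫ u in Set.Iic (b - c), φ u := by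
        rw [neg_Ici φ (fun u => by simp [φ, neg_pow]) (c - b), neg_sub]
    _ = Real.exp (b ^ 2 / 2) * stdNormalCDF (b - c) := rfl

lemma integral_pdf_Ici (c : ℝ) :
    ∫ z in Set.Ici c, φ z = stdNormalCDF (-c) := by
  rw [neg_Ici φ (fun u => by simp [φ, neg_pow]) c]; rfl

end BSaux

theorem stmt_12 (x k σ τ r : ℝ) (hx : 0 < x) (hk : 0 < k) (hσ : 0 < σ) (hτ : 0 < τ)
    (d1 d2 : ℝ)
    (hd1 : d1 = (Real.log (x / k) + (r + σ ^ 2 / 2) * τ) / (σ * Real.sqrt τ))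
    (hd2 : d2 = d1 - σ * Real.sqrt τ) :
    Real.exp (-r * τ) *
        ∫ z, max (x * Real.exp ((r - σ ^ 2 / 2) * τ + σ * Real.sqrt τ * z) - k) 0
          ∂(gaussianReal 0 1) =
      x * stdNormalCDF d1 - k * Real.exp (-r * τ) * stdNormalCDF d2 := by
  open BSaux in
  set b : ℝ := σ * Real.sqrt τ with hb
  have hb0 : 0 < b := mul_pos hσ (Real.sqrt_pos.mpr hτ)
  have hbsq : b ^ 2 = σ ^ 2 * τ := by
    rw [hb, mul_pow, Real.sq_sqrt hτ.le]
  set a : ℝ := (r - σ ^ 2 / 2) * τ with ha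
  have hlog : Real.log (x / k) = -Real.log (k / x) := by
    rw [Real.log_div hx.ne' hk.ne', Real.log_div hk.ne' hx.ne']; ring
  have hd2b : -d2 * b = Real.log (k / x) - a := by
    have e1 : (Real.log (x / k) + (r + σ ^ 2 / 2) * τ) / b * b
        = Real.log (x / k) + (r + σ ^ 2 / 2) * τ := div_mul_cancel₀ _ hb0.ne'
    rw [hd2, hd1, ha]
    have hbb : b * b = σ ^ 2 * τ := by rw [← sq]; exact hbsq
    linear_combination -e1 + hbb - hlog
  have hthr : ∀ z : ℝ, (0 ≤ x * Real.exp (a + b * z) - k) ↔ -d2 ≤ z := by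
    intro z
    rw [sub_nonneg]
    have h1 : k ≤ x * Real.exp (a + b * z) ↔ Real.log (k / x) ≤ a + b * z := by
      rw [Real.log_le_iff_le_exp (div_pos hk hx), div_le_iff₀ hx, mul_comm]
    rw [h1]
    constructor
    · intro h
      have h2 : -d2 * b ≤ z * b := by rw [hd2b]; linarith
      exact le_of_mul_le_mul_right h2 hb0
    · intro h
      have h2 : -d2 * b ≤ z * b := mul_le_mul_of_nonneg_right h hb0.le
      rw [hd2b] at h2; linarith
  have hind : ∀ z : ℝ, max (x * Real.exp (a + b * z) - k) 0 * φ z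
      = (Set.Ici (-d2)).indicator (fun z => (x * Real.exp (a + b * z) - k) * φ z) z := by
    intro z
    by_cases hz : -d2 ≤ z
    · simp only [Set.indicator_apply, Set.mem_Ici, hz, if_true]
      rw [max_eq_left ((hthr z).mpr hz)]
    · simp only [Set.indicator_apply, Set.mem_Ici, hz, if_false]
      rw [max_eq_right (not_le.mp fun h => hz ((hthr z).mp h)).le, zero_mul]
  rw [integral_gauss01]
  simp_rw [hind]
  rw [integral_indicator measurableSet_Ici]
  have hint1 : IntegrableOn (fun z => x * Real.exp a * (Real.exp (b * z) * φ z))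
      (Set.Ici (-d2)) volume := ((integrable_exp_mul_pdf b).const_mul _).integrableOn
  have hint2 : IntegrableOn (fun z => k * φ z) (Set.Ici (-d2)) volume :=
    (integrable_pdf.const_mul k).integrableOn
  have hsplit : ∫ z in Set.Ici (-d2), (x * Real.exp (a + b * z) - k) * φ z
      = (∫ z in Set.Ici (-d2), x * Real.exp a * (Real.exp (b * z) * φ z))
        - ∫ z in Set.Ici (-d2), k * φ z := by
    rw [← integral_sub hint1 hint2]
    refine setIntegral_congr_fun measurableSet_Ici fun z _ => ?_
    rw [Real.exp_add]; ring
  rw [hsplit, integral_const_mul, integral_const_mul, integral_exp_mul_pdf_Ici,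
    integral_pdf_Ici, neg_neg]
  have hbd : b - -d2 = d1 := by rw [hd2]; ring
  rw [hbd]
  have hexp : Real.exp (-r * τ) * (Real.exp a * Real.exp (b ^ 2 / 2)) = 1 := by
    rw [← Real.exp_add, ← Real.exp_add,
      show -r * τ + (a + b ^ 2 / 2) = 0 by rw [ha, hbsq]; ring]
    exact Real.exp_zero
  linear_combination (x * stdNormalCDF d1) * hexp
end
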